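/- Let x and y be minimum-weight bases of a matroid M with weight function w : E → R such that w(x) = w(y) (equal total weight, both minimum). If x ≠ y, then there exists a bijection γ between x \ y and y \ x with w(u) = w(γ(u)) for all u ∈ x \ y. Consequently, the multiset of weights of elements of x equals that of y. -/

import Mathlib

open scoped BigOperators
open Set

private lemma sum_exchange {α : Type*} [Fintype α] (w : α → ℝ) (s : Set α) {e f : α}
    (he : e ∈ s) (hf : f ∉ s) :
    (∑ᶠ i ∈ (insert f (s \ {e}) : Set α), w i) = (∑ᶠ i ∈ s, w i) - w e + w f := by
  classical
  have h1 : (insert f (s \ {e}) : Set α) = ↑(insert f (s.toFinset.erase e)) := by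
    ext a; simp [and_comm]
  rw [h1, finsum_mem_coe_finset, finsum_mem_eq_toFinset_sum,
    Finset.sum_insert (by simp [hf]), Finset.sum_erase_eq_sub (by simpa using he)]
  ring

private lemma aux_bij {α : Type*} [Fintype α] (M : Matroid α) (w : α → ℝ) :
    ∀ n : ℕ, ∀ x y : Set α, M.IsBase x → M.IsBase y →
    (∀ b : Set α, M.IsBase b → (∑ᶠ e ∈ x, w e) ≤ ∑ᶠ e ∈ b, w e) →
    (∀ b : Set α, M.IsBase b → (∑ᶠ e ∈ y, w e) ≤ ∑ᶠ e ∈ b, w e) →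
    (x \ y).ncard ≤ n →
    ∃ γ : α → α, Set.BijOn γ (x \ y) (y \ x) ∧ ∀ u ∈ x \ y, w u = w (γ u) := by
  classical
  intro n
  induction n with
  | zero =>
    intro x y hx hy _ _ hcard
    have hempty : x \ y = ∅ := by
      rw [← Set.ncard_eq_zero (Set.toFinite _)]; omega
    have hxy : x = y := hx.eq_of_subset_isBase hy (diff_eq_empty.mp hempty)
    refine ⟨id, ?_, by simp⟩
    subst hxy
    simp [hempty]
  | succ n ih =>
    intro x y hx hy hxmin hymin hcard
    rcases Set.eq_empty_or_nonempty (x \ y) with hempty | hne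
    · have hxy : x = y := hx.eq_of_subset_isBase hy (diff_eq_empty.mp hempty)
      refine ⟨id, ?_, by simp⟩
      subst hxy; simp [hempty]
    · -- pick max-weight element of the symmetric difference
      obtain ⟨e, hed, hmax⟩ := Set.exists_max_image ((x \ y) ∪ (y \ x)) w
        (Set.toFinite _) (hne.mono subset_union_left)
      rcases hed with he | he
      · -- e ∈ x \ y : exchange out of x
        obtain ⟨f, hf, hx'⟩ := hx.exchange hy he
        set x' : Set α := insert f (x \ {e}) with hx'def
        have hSx' : (∑ᶠ i ∈ x', w i) = (∑ᶠ i ∈ x, w i) - w e + w f :=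
          sum_exchange w x he.1 hf.2
        have hwef : w f = w e := by
          have h1 := hxmin x' hx'
          have h2 := hmax f (Or.inr hf)
          rw [hSx'] at h1; linarith
        have hSx'' : (∑ᶠ i ∈ x', w i) = ∑ᶠ i ∈ x, w i := by rw [hSx', hwef]; ring
        have hx'min : ∀ b : Set α, M.IsBase b → (∑ᶠ i ∈ x', w i) ≤ ∑ᶠ i ∈ b, w i := by
          intro b hb; rw [hSx'']; exact hxmin b hb
        have hd1 : x' \ y = (x \ y) \ {e} := by
          rw [hx'def, insert_diff_of_mem _ hf.1, diff_diff_comm]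
        have hd2 : y \ x' = (y \ x) \ {f} := by
          ext a
          simp only [hx'def, mem_diff, mem_insert_iff, mem_singleton_iff, not_or]
          constructor
          · rintro ⟨hay, haf, hax⟩
            exact ⟨⟨hay, fun h => hax ⟨h, fun h' => he.2 (h' ▸ hay)⟩⟩, haf⟩
          · rintro ⟨⟨hay, hax⟩, haf⟩
            exact ⟨hay, haf, fun h => hax h.1⟩
        have hcard' : (x' \ y).ncard ≤ n := by
          rw [hd1]
          have := Set.ncard_diff_singleton_lt_of_mem he (Set.toFinite _)
          omega
        obtain ⟨γ', hbij, hwγ⟩ := ih x' y hx' hy hx'min hymin hcard'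
        rw [hd1] at hbij hwγ
        rw [hd2] at hbij
        refine ⟨Function.update γ' e f, ?_, ?_⟩
        · have hbij2 : Set.BijOn (Function.update γ' e f) ((x \ y) \ {e}) ((y \ x) \ {f}) :=
            hbij.congr fun a ha => (Function.update_of_ne ha.2 _ _).symm
          have := hbij2.insert (a := e) (by simp)
          rwa [Function.update_self, insert_diff_singleton, insert_eq_self.mpr he,
            insert_diff_singleton, insert_eq_self.mpr hf] at this
        · intro u hu
          rcases eq_or_ne u e with rfl | hue
          · rw [Function.update_self, hwef]
          · rw [Function.update_of_ne hue]
            exact hwγ u ⟨hu, hue⟩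
      · -- e ∈ y \ x : exchange out of y
        obtain ⟨f, hf, hy'⟩ := hy.exchange hx he
        set y' : Set α := insert f (y \ {e}) with hy'def
        have hSy' : (∑ᶠ i ∈ y', w i) = (∑ᶠ i ∈ y, w i) - w e + w f :=
          sum_exchange w y he.1 hf.2
        have hwef : w f = w e := by
          have h1 := hymin y' hy'
          have h2 := hmax f (Or.inl hf)
          rw [hSy'] at h1; linarith
        have hSy'' : (∑ᶠ i ∈ y', w i) = ∑ᶠ i ∈ y, w i := by rw [hSy', hwef]; ring
        have hy'min : ∀ b : Set α, M.IsBase b → (∑ᶠ i ∈ y', w i) ≤ ∑ᶠ i ∈ b, w i := by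
          intro b hb; rw [hSy'']; exact hymin b hb
        have hd1 : y' \ x = (y \ x) \ {e} := by
          rw [hy'def, insert_diff_of_mem _ hf.1, diff_diff_comm]
        have hd2 : x \ y' = (x \ y) \ {f} := by
          ext a
          simp only [hy'def, mem_diff, mem_insert_iff, mem_singleton_iff, not_or]
          constructor
          · rintro ⟨hax, haf, hay⟩
            exact ⟨⟨hax, fun h => hay ⟨h, fun h' => he.2 (h' ▸ hax)⟩⟩, haf⟩
          · rintro ⟨⟨hax, hay⟩, haf⟩
            exact ⟨hax, haf, fun h => hay h.1⟩
        have hcard' : (x \ y').ncard ≤ n := by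
          rw [hd2]
          have := Set.ncard_diff_singleton_lt_of_mem hf (Set.toFinite _)
          omega
        obtain ⟨γ', hbij, hwγ⟩ := ih x y' hx hy' hxmin hy'min hcard'
        rw [hd2] at hbij hwγ
        rw [hd1] at hbij
        refine ⟨Function.update γ' f e, ?_, ?_⟩
        · have hbij2 : Set.BijOn (Function.update γ' f e) ((x \ y) \ {f}) ((y \ x) \ {e}) :=
            hbij.congr fun a ha => (Function.update_of_ne ha.2 _ _).symm
          have := hbij2.insert (a := f) (by simp)
          rwa [Function.update_self, insert_diff_singleton, insert_eq_self.mpr hf,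
            insert_diff_singleton, insert_eq_self.mpr he] at this
        · intro u hu
          rcases eq_or_ne u f with rfl | huf
          · rw [Function.update_self, hwef]
          · rw [Function.update_of_ne huf]
            exact hwγ u ⟨hu, huf⟩

/-- if `x` and `y` are minimum-weight bases of a matroid (hence of equal total
weight), and `x ≠ y`, then there is a weight-preserving bijection between `x \ y` and
`y \ x`. -/
theorem min_weight_bases_weight_bijection
    {α : Type*} [Fintype α] (M : Matroid α) (w : α → ℝ)
    (x y : Set α) (hx : M.IsBase x) (hy : M.IsBase y)
    (hxmin : ∀ b : Set α, M.IsBase b → (∑ᶠ e ∈ x, w e) ≤ ∑ᶠ e ∈ b, w e)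
    (hymin : ∀ b : Set α, M.IsBase b → (∑ᶠ e ∈ y, w e) ≤ ∑ᶠ e ∈ b, w e)
    (hw : (∑ᶠ e ∈ x, w e) = ∑ᶠ e ∈ y, w e)
    (hxy : x ≠ y) :
    ∃ γ : (x \ y : Set α) ≃ (y \ x : Set α), ∀ u : (x \ y : Set α), w u = w (γ u) := by
  obtain ⟨γ, hbij, hwγ⟩ := aux_bij M w (x \ y).ncard x y hx hy hxmin hymin le_rfl
  exact ⟨hbij.equiv γ, fun u => hwγ u u.2⟩
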